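/- Consider the log-linear model with parameters θ = (θ₁, θ₂, θ₃), θ₂ > 0, θ₃ > 0, on the design region [L,U] with 0 < L < U. Let x_l* = ((L+θ₃)(U+θ₃)/(U−L)) · log((U+θ₃)/(L+θ₃)) − θ₃ and ω_l* = (log(x_l*+θ₃) − log(U+θ₃)) / (2(log(L+θ₃) − log(U+θ₃))). The design ξ* that puts weight ω_l* at L, weight 1/2 at x_l*, and weight 1/2 − ω_l* at U has invertible information matrix M_{ξ*}, and for every design ξ on [L,U] whose information matrix M_ξ is invertible, (M_{ξ*}^{−1})₃₃ ≤ (M_ξ^{−1})₃₃; that is, ξ* is e₃-optimal (c-optimal for the parameter θ₃). -/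

import Mathlib

structure Design (I : Set ℝ) where
  pts : Finset ℝ
  w : ℝ → ℝ
  mem_pts : ∀ x ∈ pts, x ∈ I
  w_nonneg : ∀ x ∈ pts, 0 ≤ w x
  w_sum : ∑ x ∈ pts, w x = 1

noncomputable def infoMat {d : ℕ} (M : ℝ → Matrix (Fin d) (Fin d) ℝ) {I : Set ℝ}
    (ξ : Design I) : Matrix (Fin d) (Fin d) ℝ :=
  ∑ x ∈ ξ.pts, ξ.w x • M x

/-- Gradient vector of the log-linear model. -/
noncomputable def fLogLin (θ₂ θ₃ : ℝ) (x : ℝ) : Fin 3 → ℝ :=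
  ![1, Real.log (x + θ₃), θ₂ / (x + θ₃)]

/-- Single-observation information matrix of the log-linear model. -/
noncomputable def logLinInfo (θ₂ θ₃ : ℝ) (x : ℝ) : Matrix (Fin 3) (Fin 3) ℝ :=
  Matrix.vecMulVec (fLogLin θ₂ θ₃ x) (fLogLin θ₂ θ₃ x)

/- ### Auxiliary lemmas -/

lemma det_sum_rank_one (c₁ c₂ c₃ : ℝ) (v₁ v₂ v₃ : Fin 3 → ℝ) :
    (c₁ • Matrix.vecMulVec v₁ v₁ + c₂ • Matrix.vecMulVec v₂ v₂ +
      c₃ • Matrix.vecMulVec v₃ v₃).det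
    = c₁ * c₂ * c₃ *
      (Matrix.of ![![v₁ 0, v₁ 1, v₁ 2], ![v₂ 0, v₂ 1, v₂ 2], ![v₃ 0, v₃ 1, v₃ 2]]).det ^ 2 := by
  simp [Matrix.det_fin_three, Matrix.vecMulVec_apply, Matrix.add_apply, Matrix.smul_apply,
    smul_eq_mul]
  ring

lemma vecMulVec_mulVec3 (v w x : Fin 3 → ℝ) :
    (Matrix.vecMulVec v w).mulVec x = (dotProduct w x) • v := by
  funext i
  simp [Matrix.vecMulVec_apply, Matrix.mulVec, dotProduct, Fin.sum_univ_three]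
  ring

lemma sum_mulVec3 {ι : Type*} (s : Finset ι) (A : ι → Matrix (Fin 3) (Fin 3) ℝ)
    (w : Fin 3 → ℝ) :
    (∑ x ∈ s, A x).mulVec w = ∑ x ∈ s, (A x).mulVec w := by
  funext i
  simp only [Matrix.mulVec, dotProduct, Matrix.sum_apply, Finset.sum_apply,
    Finset.sum_mul]
  rw [Finset.sum_comm]

lemma dotProduct_sum3 {ι : Type*} (s : Finset ι) (v : Fin 3 → ℝ) (f : ι → Fin 3 → ℝ) :
    dotProduct v (∑ x ∈ s, f x) = ∑ x ∈ s, dotProduct v (f x) := by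
  simp only [dotProduct, Finset.sum_apply, Finset.mul_sum]
  rw [Finset.sum_comm]

lemma key_log {a s b : ℝ} (ha : 0 < a) (has : a < s) (hsb : s < b) :
    (Real.log s - Real.log a) * (1/a - 1/b) <
      (Real.log b - Real.log a) * (1/a - 1/s) := by
  have hs : 0 < s := ha.trans has
  have hb : 0 < b := hs.trans hsb
  have hpa : (0:ℝ) < 1/a := by positivity
  have hpb : (0:ℝ) < 1/b := by positivity
  have hps : (0:ℝ) < 1/s := by positivity
  have h1 : 1/b < 1/s := by
    rw [div_lt_div_iff₀ hb hs]; nlinarith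
  have h2 : 1/s < 1/a := by
    rw [div_lt_div_iff₀ hs ha]; nlinarith
  set lam := (1/a - 1/s) / (1/a - 1/b) with hlam
  set mu := (1/s - 1/b) / (1/a - 1/b) with hmu
  have hd : (0:ℝ) < 1/a - 1/b := by linarith
  have hd' : (1/a - 1/b : ℝ) ≠ 0 := ne_of_gt hd
  have hlam0 : 0 < lam := by apply div_pos <;> linarith
  have hmu0 : 0 < mu := by apply div_pos <;> linarith
  have hsum : lam + mu = 1 := by
    rw [hlam, hmu, ← add_div]
    have : (1/a - 1/s) + (1/s - 1/b) = 1/a - 1/b := by ring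
    rw [this, div_self hd']
  have hcomb : lam • (1/b) + mu • (1/a) = 1/s := by
    simp only [smul_eq_mul, hlam, hmu]
    rw [div_mul_eq_mul_div, div_mul_eq_mul_div, ← add_div]
    have : (1/a - 1/s)*(1/b) + (1/s - 1/b)*(1/a) = (1/s)*(1/a - 1/b) := by ring
    rw [this, mul_div_assoc, div_self hd', mul_one]
  have hcc := strictConcaveOn_log_Ioi.2 (Set.mem_Ioi.2 hpb) (Set.mem_Ioi.2 hpa)
    (by intro h; rw [h] at h1; linarith) hlam0 hmu0 hsum
  rw [hcomb] at hcc
  rw [one_div, one_div, one_div, Real.log_inv, Real.log_inv, Real.log_inv] at hcc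
  simp only [smul_eq_mul] at hcc
  have h3 : Real.log s < lam * Real.log b + mu * Real.log a := by linarith
  have h4 : (Real.log s - Real.log a) < lam * (Real.log b - Real.log a) := by
    have hm : mu = 1 - lam := by linarith
    rw [hm] at h3; linarith
  have h5 : lam * (1/a - 1/b) = 1/a - 1/s := by
    rw [hlam, div_mul_cancel₀ _ hd']
  calc (Real.log s - Real.log a) * (1/a - 1/b)
      < lam * (Real.log b - Real.log a) * (1/a - 1/b) := by
        apply mul_lt_mul_of_pos_right h4 hd
    _ = (Real.log b - Real.log a) * (1/a - 1/s) := by rw [mul_comm lam, mul_assoc, h5]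

set_option maxHeartbeats 1000000 in
theorem stmt12 (θ₁ θ₂ θ₃ : ℝ) (hθ₂ : 0 < θ₂) (hθ₃ : 0 < θ₃) (L U : ℝ)
    (hL : 0 < L) (hLU : L < U)
    (xl ωl : ℝ)
    (hxl : xl = (L + θ₃) * (U + θ₃) / (U - L) * Real.log ((U + θ₃) / (L + θ₃)) - θ₃)
    (hωl : ωl = (Real.log (xl + θ₃) - Real.log (U + θ₃)) /
      (2 * (Real.log (L + θ₃) - Real.log (U + θ₃)))) :
    IsUnit (ωl • logLinInfo θ₂ θ₃ L + (1 / 2 : ℝ) • logLinInfo θ₂ θ₃ xl +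
        (1 / 2 - ωl) • logLinInfo θ₂ θ₃ U).det ∧
    ∀ ξ : Design (Set.Icc L U), IsUnit (infoMat (logLinInfo θ₂ θ₃) ξ).det →
      (ωl • logLinInfo θ₂ θ₃ L + (1 / 2 : ℝ) • logLinInfo θ₂ θ₃ xl +
        (1 / 2 - ωl) • logLinInfo θ₂ θ₃ U)⁻¹ 2 2 ≤
      (infoMat (logLinInfo θ₂ θ₃) ξ)⁻¹ 2 2 := by
  have hθ₂' : θ₂ ≠ 0 := ne_of_gt hθ₂
  set a := L + θ₃ with hadef
  set b := U + θ₃ with hbdef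
  have ha0 : 0 < a := by rw [hadef]; linarith
  have hb0 : 0 < b := by rw [hbdef]; linarith
  have hab : a < b := by rw [hadef, hbdef]; linarith
  have ha' : a ≠ 0 := ne_of_gt ha0
  have hb' : b ≠ 0 := ne_of_gt hb0
  set la := Real.log a with hladef
  set lb := Real.log b with hlbdef
  have hlab : la < lb := Real.log_lt_log ha0 hab
  set t := xl + θ₃ with htdef
  have ht : t = a * b / (b - a) * (lb - la) := by
    have hUL : U - L = b - a := by rw [hadef, hbdef]; ring
    rw [htdef, hxl, hladef, hlbdef, Real.log_div hb' ha', hUL]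
    ring
  have hba : (0:ℝ) < b - a := by linarith
  have htprod : t * (b - a) = a * b * (lb - la) := by
    rw [ht]; field_simp
  -- a < t
  have e1 : (b - a) / b < lb - la := by
    have h := Real.log_lt_sub_one_of_pos (x := a / b) (by positivity)
      (by intro h; rw [div_eq_one_iff_eq hb'] at h; linarith)
    rw [Real.log_div ha' hb'] at h
    rw [div_lt_iff₀ hb0]
    have : a / b * b = a := by field_simp
    nlinarith [h, this]
  have e2 : lb - la < (b - a) / a := by
    have h := Real.log_lt_sub_one_of_pos (x := b / a) (by positivity)
      (by intro h; rw [div_eq_one_iff_eq ha'] at h; linarith)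
    rw [Real.log_div hb' ha'] at h
    have hba' : b / a - 1 = (b - a) / a := by field_simp
    rw [hladef, hlbdef]
    linarith [h, hba'.ge, hba'.le]
  have hta : a < t := by
    have h1 : a * (b - a) < a * b * (lb - la) := by
      rw [div_lt_iff₀ hb0] at e1
      nlinarith
    nlinarith [htprod]
  have htb : t < b := by
    have h1 : a * b * (lb - la) < b * (b - a) := by
      rw [lt_div_iff₀ ha0] at e2
      nlinarith
    nlinarith [htprod]
  have ht0 : 0 < t := ha0.trans hta
  have ht' : t ≠ 0 := ne_of_gt ht0
  set lt' := Real.log t with hltdef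
  have hlat : la < lt' := Real.log_lt_log ha0 hta
  have hltb : lt' < lb := Real.log_lt_log ht0 htb
  -- h(b) = h(a)
  have h_heq : lb + t/b = la + t/a := by
    have h1 : (lb + t/b) * (a*b) = (la + t/a) * (a*b) := by
      have e1 : t/b*(a*b) = t*a := by field_simp
      have e2 : t/a*(a*b) = t*b := by field_simp
      calc (lb + t/b)*(a*b) = lb*(a*b) + t/b*(a*b) := by ring
      _ = lb*(a*b) + t*a := by rw [e1]
      _ = la*(a*b) + t*b := by linear_combination -htprod
      _ = (la + t/a)*(a*b) := by rw [← e2]; ring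
    exact mul_right_cancel₀ (mul_ne_zero ha' hb') h1
  -- Δ > 0
  have hΔ : 0 < (la + t/a) - (lt' + 1) := by
    have h := Real.log_lt_sub_one_of_pos (x := t / a) (by positivity)
      (by intro h; rw [div_eq_one_iff_eq ha'] at h; linarith)
    rw [Real.log_div ht' ha'] at h
    have : t / a - 1 - (lt' - la) > 0 := by linarith
    linarith
  set Δ := (la + t/a) - (lt' + 1) with hΔdef
  set β := 2 / Δ with hβdef
  have hΔ' : Δ ≠ 0 := ne_of_gt hΔ
  have hβ : 0 < β := by positivity
  have hβΔ : β * Δ = 2 := div_mul_cancel₀ 2 hΔ'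
  set u : Fin 3 → ℝ := ![1 - β*(la + t/a), β, β*t/θ₂] with hudef
  clear_value a b la lb t lt' Δ β u
  -- dot products
  have hdot : ∀ x : ℝ, x + θ₃ ≠ 0 → dotProduct (fLogLin θ₂ θ₃ x) u
      = 1 + β*((Real.log (x + θ₃) + t/(x + θ₃)) - (la + t/a)) := by
    intro x hx
    simp only [fLogLin, hudef, dotProduct, Fin.sum_univ_three, Matrix.cons_val_zero,
      Matrix.cons_val_one, Matrix.head_cons, Matrix.cons_val_two, Matrix.tail_cons]
    field_simp
    ring
  have hdL : dotProduct (fLogLin θ₂ θ₃ L) u = 1 := by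
    have h := hdot L (by rw [← hadef]; exact ha')
    rw [← hadef, ← hladef] at h
    rw [h]; ring
  have hdxl : dotProduct (fLogLin θ₂ θ₃ xl) u = -1 := by
    have h := hdot xl (by rw [← htdef]; exact ht')
    rw [← htdef, ← hltdef, div_self ht'] at h
    rw [h]
    linear_combination (-1 : ℝ)*hβΔ + β*hΔdef
  have hdU : dotProduct (fLogLin θ₂ θ₃ U) u = 1 := by
    have h := hdot U (by rw [← hbdef]; exact hb')
    rw [← hbdef, ← hlbdef, h_heq] at h
    rw [h]; ring
  -- the bound |ψ| ≤ 1 on [L, U]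
  have hbound : ∀ x : ℝ, L ≤ x → x ≤ U →
      (dotProduct (fLogLin θ₂ θ₃ x) u)^2 ≤ 1 := by
    intro x h1 h2
    have hs0 : 0 < x + θ₃ := by linarith
    have hd := hdot x (ne_of_gt hs0)
    have hlow : lt' + 1 ≤ Real.log (x + θ₃) + t/(x + θ₃) := by
      have h3 := Real.log_le_sub_one_of_pos (x := t/(x + θ₃)) (by positivity)
      rw [Real.log_div ht' (ne_of_gt hs0), ← hltdef] at h3
      linarith
    have hup : Real.log (x + θ₃) + t/(x + θ₃) ≤ la + t/a := by
      rcases eq_or_lt_of_le (show a ≤ x + θ₃ by rw [hadef]; linarith) with he | hlt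
      · rw [← he, ← hladef]
      · rcases eq_or_lt_of_le (show x + θ₃ ≤ b by rw [hbdef]; linarith) with he2 | hlt2
        · rw [he2, ← hlbdef, h_heq]
        · have hk := key_log ha0 hlt hlt2
          rw [← hladef, ← hlbdef] at hk
          have htab : t * (1/a - 1/b) = lb - la := by
            have e3 : t * (1/a - 1/b) * (a*b) = t * (b - a) := by field_simp
            have e4 : (lb - la) * (a*b) = a * b * (lb - la) := by ring
            have e5 : t * (1/a - 1/b) * (a*b) = (lb - la) * (a*b) := by
              rw [e3, e4, htprod]
            exact mul_right_cancel₀ (mul_ne_zero ha' hb') e5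
          have hd2 : (0:ℝ) < 1/a - 1/b := by
            rw [sub_pos, div_lt_div_iff₀ hb0 ha0]; nlinarith
          rw [← htab] at hk
          have e6 : (t * (1/a - 1/b)) * (1/a - 1/(x + θ₃))
              = (t * (1/a - 1/(x + θ₃))) * (1/a - 1/b) := by ring
          rw [e6] at hk
          have h6 : Real.log (x + θ₃) - la < t * (1/a - 1/(x + θ₃)) :=
            lt_of_mul_lt_mul_right hk (le_of_lt hd2)
          have h8 : t * (1/a - 1/(x + θ₃)) = t/a - t/(x + θ₃) := by ring
          linarith
    rw [hd]
    have m1 : β*((Real.log (x + θ₃) + t/(x + θ₃)) - (la + t/a)) ≤ 0 :=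
      mul_nonpos_of_nonneg_of_nonpos (le_of_lt hβ) (by linarith)
    have m2 : -2 ≤ β*((Real.log (x + θ₃) + t/(x + θ₃)) - (la + t/a)) := by
      have e7 : -Δ ≤ (Real.log (x + θ₃) + t/(x + θ₃)) - (la + t/a) := by
        rw [hΔdef]; linarith
      have e8 := mul_le_mul_of_nonneg_left e7 (le_of_lt hβ)
      have e9 : β * (-Δ) = -2 := by rw [mul_neg, hβΔ]
      linarith
    nlinarith [m1, m2]
  -- ωl facts
  have hlalb : la - lb ≠ 0 := by intro h; linarith [sub_eq_zero.mp h, hlab]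
  have hω1 : ωl * (2*(la - lb)) = lt' - lb := by
    rw [hωl, div_mul_cancel₀]
    exact mul_ne_zero two_ne_zero hlalb
  have hωpos : 0 < ωl := by
    rw [hωl]
    apply div_pos_of_neg_of_neg <;> linarith
  have hωhalf : ωl < 1/2 := by
    by_contra hcon
    push_neg at hcon
    have e10 : (ωl - 1/2)*(2*(la - lb)) ≤ 0 :=
      mul_nonpos_of_nonneg_of_nonpos (by linarith) (by linarith)
    nlinarith [e10, hω1]
  -- vector forms of the gradient at the three support points
  have hfa : fLogLin θ₂ θ₃ L = ![1, la, θ₂/a] := by rw [hladef, hadef]; rfl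
  have hfx : fLogLin θ₂ θ₃ xl = ![1, lt', θ₂/t] := by rw [hltdef, htdef]; rfl
  have hfU : fLogLin θ₂ θ₃ U = ![1, lb, θ₂/b] := by rw [hlbdef, hbdef]; rfl
  set Mstar := ωl • logLinInfo θ₂ θ₃ L + (1 / 2 : ℝ) • logLinInfo θ₂ θ₃ xl +
      (1 / 2 - ωl) • logLinInfo θ₂ θ₃ U with hMs
  clear_value Mstar
  -- positivity of D
  have hk2 := key_log ha0 hta htb
  rw [← hladef, ← hlbdef, ← hltdef] at hk2
  set D := (lt' - la)*(1/b - 1/a) - (lb - la)*(1/t - 1/a) with hDdef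
  clear_value D
  have hD : 0 < D := by
    have e11 : D = (lb - la)*(1/a - 1/t) - (lt' - la)*(1/a - 1/b) := by rw [hDdef]; ring
    rw [e11]; linarith [hk2]
  have hdetV : (Matrix.of ![![(1:ℝ), la, θ₂/a], ![1, lt', θ₂/t], ![1, lb, θ₂/b]]).det
      = θ₂ * D := by
    rw [hDdef]
    simp [Matrix.det_fin_three, Matrix.vecHead, Matrix.vecTail]
    ring
  have hdet1 : Mstar.det = ωl * (1/2) * (1/2 - ωl) * (θ₂ * D)^2 := by
    rw [hMs]
    simp only [logLinInfo]
    rw [hfa, hfx, hfU, det_sum_rank_one]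
    simp only [Matrix.cons_val_zero, Matrix.cons_val_one, Matrix.head_cons,
      Matrix.cons_val_two, Matrix.tail_cons]
    rw [hdetV]
  have hMdetpos : 0 < Mstar.det := by
    rw [hdet1]
    apply mul_pos
    apply mul_pos
    apply mul_pos hωpos
    norm_num
    linarith
    exact pow_pos (mul_pos hθ₂ hD) 2
  have hMdet : IsUnit Mstar.det := isUnit_iff_ne_zero.mpr (ne_of_gt hMdetpos)
  refine ⟨hMdet, ?_⟩
  -- the equation Mstar * u = κ e₃
  have hMu0 : Mstar.mulVec u = ωl • (fLogLin θ₂ θ₃ L) +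
      ((1/2 : ℝ)*(-1)) • (fLogLin θ₂ θ₃ xl) + (1/2 - ωl) • (fLogLin θ₂ θ₃ U) := by
    rw [hMs]
    simp only [logLinInfo]
    rw [Matrix.add_mulVec, Matrix.add_mulVec, Matrix.smul_mulVec,
      Matrix.smul_mulVec, Matrix.smul_mulVec, vecMulVec_mulVec3,
      vecMulVec_mulVec3, vecMulVec_mulVec3, hdL, hdxl, hdU, one_smul, one_smul, smul_smul]
  set e3 : Fin 3 → ℝ := ![0,0,1] with he3
  set κ := ωl * (θ₂/a) + (1/2)*(-1) * (θ₂/t) + (1/2 - ωl) * (θ₂/b) with hκdef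
  clear_value e3 κ
  have hMu : Mstar.mulVec u = κ • e3 := by
    rw [hMu0, hfa, hfx, hfU, he3, hκdef]
    funext i
    fin_cases i
    · simp [Matrix.vecHead, Matrix.vecTail]
      ring
    · simp [Matrix.vecHead, Matrix.vecTail]
      linear_combination hω1 / 2
    · simp [Matrix.vecHead, Matrix.vecTail]
  have hq1 : dotProduct u (Mstar.mulVec u) = κ * (β*t/θ₂) := by
    rw [hMu, he3, hudef]
    simp [dotProduct, Fin.sum_univ_three, Matrix.vecHead, Matrix.vecTail]
    ring
  have hq2 : dotProduct u (Mstar.mulVec u) = 1 := by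
    rw [hMu0, dotProduct_add, dotProduct_add, dotProduct_smul,
      dotProduct_smul, dotProduct_smul,
      dotProduct_comm u (fLogLin θ₂ θ₃ L), dotProduct_comm u (fLogLin θ₂ θ₃ xl),
      dotProduct_comm u (fLogLin θ₂ θ₃ U), hdL, hdxl, hdU]
    simp only [smul_eq_mul]
    ring
  have hκβ : κ * (β*t/θ₂) = 1 := hq1.symm.trans hq2
  have hu3pos : 0 < β*t/θ₂ := by positivity
  have hscale : Mstar.mulVec ((β*t/θ₂) • u) = e3 := by
    rw [Matrix.mulVec_smul, hMu, smul_smul, show (β*t/θ₂) * κ = 1 by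
      rw [mul_comm]; exact hκβ, one_smul]
  have hMinv : Mstar⁻¹ * Mstar = 1 := Matrix.nonsing_inv_mul _ hMdet
  have hsolve : (β*t/θ₂) • u = Mstar⁻¹.mulVec e3 := by
    have h1 := congrArg (fun z => Mstar⁻¹.mulVec z) hscale
    rw [Matrix.mulVec_mulVec, hMinv, Matrix.one_mulVec] at h1
    exact h1
  have hinv22 : Mstar⁻¹ 2 2 = (β*t/θ₂)^2 := by
    have h2 : (Mstar⁻¹.mulVec e3) 2 = Mstar⁻¹ 2 2 := by
      rw [he3]; simp [Matrix.mulVec, dotProduct, Fin.sum_univ_three]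
    rw [← hsolve] at h2
    rw [← h2, hudef]
    simp only [Pi.smul_apply, smul_eq_mul, Matrix.cons_val_two, Matrix.tail_cons,
      Matrix.head_cons]
    ring
  -- the general design
  intro ξ hdet
  set M := infoMat (logLinInfo θ₂ θ₃) ξ with hMdef
  clear_value M
  have hquad : ∀ z w : Fin 3 → ℝ, dotProduct z (M.mulVec w) =
      ∑ x ∈ ξ.pts, ξ.w x *
        (dotProduct (fLogLin θ₂ θ₃ x) z * dotProduct (fLogLin θ₂ θ₃ x) w) := by
    intro z w
    rw [hMdef, infoMat, sum_mulVec3, dotProduct_sum3]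
    apply Finset.sum_congr rfl
    intro x hx
    rw [Matrix.smul_mulVec, dotProduct_smul, logLinInfo, vecMulVec_mulVec3,
      dotProduct_smul, dotProduct_comm z (fLogLin θ₂ θ₃ x)]
    simp only [smul_eq_mul]
    ring
  have hMv : M.mulVec (M⁻¹.mulVec e3) = e3 := by
    rw [Matrix.mulVec_mulVec, Matrix.mul_nonsing_inv _ hdet, Matrix.one_mulVec]
  set v := M⁻¹.mulVec e3 with hvdef
  clear_value v
  have hv2 : v 2 = M⁻¹ 2 2 := by
    rw [hvdef, he3]; simp [Matrix.mulVec, dotProduct, Fin.sum_univ_three]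
  have hAe : dotProduct v (M.mulVec v) = M⁻¹ 2 2 := by
    rw [hMv, he3, ← hv2]
    simp [dotProduct, Fin.sum_univ_three]
  have hBe : dotProduct u (M.mulVec v) = β*t/θ₂ := by
    rw [hMv, he3, hudef]
    simp [dotProduct, Fin.sum_univ_three]
  have hsum1 : ∑ x ∈ ξ.pts, ξ.w x * (dotProduct (fLogLin θ₂ θ₃ x) u)^2 ≤ 1 := by
    conv_rhs => rw [← ξ.w_sum]
    apply Finset.sum_le_sum
    intro x hx
    have hmem := ξ.mem_pts x hx
    have hb1 := hbound x hmem.1 hmem.2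
    have hw := ξ.w_nonneg x hx
    have := mul_le_mul_of_nonneg_left hb1 hw
    linarith
  have hg0 : 0 ≤ M⁻¹ 2 2 := by
    rw [← hAe, hquad v v]
    apply Finset.sum_nonneg
    intro x hx
    exact mul_nonneg (ξ.w_nonneg x hx) (mul_self_nonneg _)
  have hCS := Finset.sum_sq_le_sum_mul_sum_of_sq_eq_mul ξ.pts
      (r := fun x => ξ.w x *
        (dotProduct (fLogLin θ₂ θ₃ x) u * dotProduct (fLogLin θ₂ θ₃ x) v))
      (f := fun x => ξ.w x * (dotProduct (fLogLin θ₂ θ₃ x) u)^2)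
      (g := fun x => ξ.w x * (dotProduct (fLogLin θ₂ θ₃ x) v)^2)
      (fun x hx => mul_nonneg (ξ.w_nonneg x hx) (sq_nonneg _))
      (fun x hx => mul_nonneg (ξ.w_nonneg x hx) (sq_nonneg _))
      (fun x hx => by ring)
  have hR : ∑ x ∈ ξ.pts, ξ.w x *
      (dotProduct (fLogLin θ₂ θ₃ x) u * dotProduct (fLogLin θ₂ θ₃ x) v)
      = β*t/θ₂ := by
    rw [← hquad u v]; exact hBe
  have hG : ∑ x ∈ ξ.pts, ξ.w x * (dotProduct (fLogLin θ₂ θ₃ x) v)^2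
      = M⁻¹ 2 2 := by
    have e12 : ∀ x : ℝ, (dotProduct (fLogLin θ₂ θ₃ x) v)^2 =
        dotProduct (fLogLin θ₂ θ₃ x) v * dotProduct (fLogLin θ₂ θ₃ x) v := by
      intro x; ring
    simp only [e12]
    rw [← hquad v v]; exact hAe
  rw [hR, hG] at hCS
  rw [hinv22]
  have hfin := mul_le_mul_of_nonneg_right hsum1 hg0
  rw [one_mul] at hfin
  linarith [hCS, hfin]
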